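/- Let F be a field of characteristic 2, I an infinite index set with pairwise distinct distinguished elements i₀, i₁, k, V an F-vector space with basis (e_i)_{i∈I}, η_i ∈ V* the coordinate functionals with η_i(e_j) = δ_{ij}, V' = span{η_i : i ∈ I} ≤ V*, and V̄' = V ⊕ V' ≤ V ⊕ V*. Let f_q((a,α),(b,β)) = α(b) + β(a) be the polar form of q(a,α) = α(a), put u_i = (e_i, η_i) ∈ V̄' and U₀₁ = span{u_i + u_j : i, j ∈ I \ {i₀, i₁}}. Then {w ∈ V̄' : f_q(w,u) = 0 for all u ∈ U₀₁} = U₀₁ + span{(e_{i₀},0), (e_{i₁},0), (0,η_{i₀}), (0,η_{i₁}), u_k}. -/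

import Mathlib

/-- `V̄' = V ⊕ V'` inside `V ⊕ V*`, where `V'` is the span of the coordinate
functionals of the basis `b`. -/
def VbarSub {F I V : Type*} [Field F] [AddCommGroup V] [Module F V]
    (b : Module.Basis I F V) : Submodule F (V × Module.Dual F V) :=
  (⊤ : Submodule F V).prod (Submodule.span F (Set.range b.coord))

/-- `U₀₁ = span { u_i + u_j : i, j ∈ I \ {i₀, i₁} }`, where `u_i = (e_i, η_i)`. -/
def U01 {F I V : Type*} [Field F] [AddCommGroup V] [Module F V]
    (b : Module.Basis I F V) (i₀ i₁ : I) : Submodule F (V × Module.Dual F V) :=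
  Submodule.span F {w : V × Module.Dual F V |
    ∃ i j : I, i ≠ i₀ ∧ i ≠ i₁ ∧ j ≠ i₀ ∧ j ≠ i₁ ∧
      w = ((b i, b.coord i) : V × Module.Dual F V) + (b j, b.coord j)}

section Aux

variable {F I V : Type*} [Field F] [AddCommGroup V] [Module F V]

/-- The polar bilinear form on `V × V*`. -/
def polarB (F V : Type*) [Field F] [AddCommGroup V] [Module F V] :
    LinearMap.BilinForm F (V × Module.Dual F V) :=
  LinearMap.mk₂ F (fun w x => w.2 x.1 + x.2 w.1)
    (fun m₁ m₂ n => by simp; ring)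
    (fun c m n => by simp; ring)
    (fun m n₁ n₂ => by simp; ring)
    (fun c m n => by simp; ring)

@[simp] lemma polarB_apply (w x : V × Module.Dual F V) :
    polarB F V w x = w.2 x.1 + x.2 w.1 := rfl

lemma sum_coord_apply (b : Module.Basis I F V) (c : I →₀ F) (j : I) :
    (c.sum fun i t => t • b.coord i) (b j) = c j := by
  classical
  rw [Finsupp.sum, LinearMap.coe_sum, Finset.sum_apply]
  simp only [LinearMap.smul_apply, Module.Basis.coord_apply, Module.Basis.repr_self,
    Finsupp.single_apply, smul_eq_mul, mul_ite, mul_one, mul_zero]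
  rw [Finset.sum_ite_eq c.support j]
  split_ifs with h
  · rfl
  · exact (Finsupp.notMem_support_iff.1 h).symm

open Classical in
lemma coord_basis (b : Module.Basis I F V) (p q : I) :
    b.coord p (b q) = if q = p then (1 : F) else 0 := by
  classical
  simp [Module.Basis.coord_apply, Module.Basis.repr_self, Finsupp.single_apply]

lemma polar_uu [CharP F 2] (b : Module.Basis I F V) (p i : I) :
    polarB F V (b p, b.coord p) (b i, b.coord i) = 0 := by
  classical
  rcases eq_or_ne i p with rfl | h
  · simp [coord_basis, CharTwo.add_self_eq_zero]
  · simp [coord_basis, h, h.symm]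

lemma mem_orthog_of_gen {b : Module.Basis I F V} {i₀ i₁ : I} (w : V × Module.Dual F V)
    (h : ∀ i j : I, i ≠ i₀ → i ≠ i₁ → j ≠ i₀ → j ≠ i₁ →
      polarB F V (((b i, b.coord i) : V × Module.Dual F V) + (b j, b.coord j)) w = 0) :
    ∀ x ∈ U01 b i₀ i₁, polarB F V x w = 0 := by
  intro x hx
  have hle : U01 b i₀ i₁ ≤ LinearMap.ker ((polarB F V).flip w) := by
    refine Submodule.span_le.2 ?_
    rintro x ⟨i, j, hi0, hi1, hj0, hj1, rfl⟩
    simpa using h i j hi0 hi1 hj0 hj1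
  simpa using hle hx

end Aux

/-- The perp of `U₀₁` inside `V̄'` with respect to the polar form
`f_q((a,α),(b,β)) = α(b) + β(a)` equals
`U₀₁ + ⟨(e_{i₀},0), (e_{i₁},0), (0,η_{i₀}), (0,η_{i₁}), u_k⟩`. -/
theorem stmt_17 {F : Type*} [Field F] [CharP F 2]
    {I : Type*} [Infinite I]
    {V : Type*} [AddCommGroup V] [Module F V]
    (b : Module.Basis I F V) (i₀ i₁ k : I)
    (h01 : i₀ ≠ i₁) (h0k : i₀ ≠ k) (h1k : i₁ ≠ k) :
    {w : V × Module.Dual F V | w ∈ VbarSub b ∧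
        ∀ x ∈ U01 b i₀ i₁, w.2 x.1 + x.2 w.1 = 0} =
      ↑(U01 b i₀ i₁ ⊔ Submodule.span F
        ({(b i₀, (0 : Module.Dual F V)), (b i₁, 0),
          ((0 : V), b.coord i₀), (0, b.coord i₁),
          (b k, b.coord k)} : Set (V × Module.Dual F V))) := by
  classical
  set R : Submodule F (V × Module.Dual F V) := U01 b i₀ i₁ ⊔ Submodule.span F
        ({(b i₀, (0 : Module.Dual F V)), (b i₁, 0),
          ((0 : V), b.coord i₀), (0, b.coord i₁),
          (b k, b.coord k)} : Set (V × Module.Dual F V)) with hRdef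
  have hmem5 : ∀ y ∈ ({(b i₀, (0 : Module.Dual F V)), (b i₁, 0),
          ((0 : V), b.coord i₀), (0, b.coord i₁),
          (b k, b.coord k)} : Set (V × Module.Dual F V)), y ∈ R :=
    fun y hy => Submodule.mem_sup_right (Submodule.subset_span hy)
  have h0 : ((b i₀, (0 : Module.Dual F V)) : V × Module.Dual F V) ∈ R := hmem5 _ (by simp)
  have h1 : ((b i₁, (0 : Module.Dual F V)) : V × Module.Dual F V) ∈ R := hmem5 _ (by simp)
  have hη0 : (((0 : V), b.coord i₀) : V × Module.Dual F V) ∈ R := hmem5 _ (by simp)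
  have hη1 : (((0 : V), b.coord i₁) : V × Module.Dual F V) ∈ R := hmem5 _ (by simp)
  have huk : ((b k, b.coord k) : V × Module.Dual F V) ∈ R := hmem5 _ (by simp)
  have hui : ∀ i, i ≠ i₀ → i ≠ i₁ → ((b i, b.coord i) : V × Module.Dual F V) ∈ R := by
    intro i hi0 hi1
    have hgen : (((b i, b.coord i) : V × Module.Dual F V) + (b k, b.coord k)) ∈ U01 b i₀ i₁ :=
      Submodule.subset_span ⟨i, k, hi0, hi1, h0k.symm, h1k.symm, rfl⟩
    simpa using sub_mem (Submodule.mem_sup_left hgen : _ ∈ R) huk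
  apply Set.eq_of_subset_of_subset
  · -- forward inclusion
    rintro ⟨a, α⟩ ⟨hwv, horth⟩
    have hα : α ∈ Submodule.span F (Set.range b.coord) := (Submodule.mem_prod.1 hwv).2
    obtain ⟨c, hc⟩ := Finsupp.mem_span_range_iff_exists_finsupp.1 hα
    set d := b.repr a with hd
    have key : ∀ i, i ≠ i₀ → i ≠ i₁ → ∀ j, j ≠ i₀ → j ≠ i₁ →
        c i + c j + (d i + d j) = 0 := by
      intro i hi0 hi1 j hj0 hj1
      have hx : (((b i, b.coord i) : V × Module.Dual F V) + (b j, b.coord j)) ∈ U01 b i₀ i₁ :=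
        Submodule.subset_span ⟨i, j, hi0, hi1, hj0, hj1, rfl⟩
      have h := horth _ hx
      rw [← hc] at h
      simp only [Prod.fst_add, Prod.snd_add, map_add, LinearMap.add_apply,
        sum_coord_apply, Module.Basis.coord_apply] at h
      exact h
    obtain ⟨j₂, hj₂⟩ := Infinite.exists_notMem_finset (c.support ∪ d.support ∪ {i₀, i₁})
    simp only [Finset.mem_union, Finset.mem_insert, Finset.mem_singleton,
      Finsupp.mem_support_iff, not_or, not_not] at hj₂
    obtain ⟨⟨hcj₂, hdj₂⟩, hj₂0, hj₂1⟩ := hj₂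
    have hcd : ∀ i, i ≠ i₀ → i ≠ i₁ → c i = d i := by
      intro i hi0 hi1
      have h := key i hi0 hi1 j₂ hj₂0 hj₂1
      rw [hcj₂, hdj₂, add_zero, add_zero] at h
      have h' := add_eq_zero_iff_eq_neg.1 h
      rwa [CharTwo.neg_eq] at h'
    set S : Finset I := c.support ∪ d.support ∪ {i₀, i₁} with hS
    have hweq : ((a, α) : V × Module.Dual F V) =
        ∑ i ∈ S, (d i • ((b i, (0 : Module.Dual F V)) : V × Module.Dual F V)
          + c i • (((0 : V), b.coord i) : V × Module.Dual F V)) := by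
      have hsub_d : d.support ⊆ S := by
        intro x hx; simp [hS, Finset.mem_union, hx]
      have hsub_c : c.support ⊆ S := by
        intro x hx; simp [hS, Finset.mem_union, hx]
      have h1' : a = ∑ i ∈ S, d i • b i := by
        conv_lhs => rw [← b.linearCombination_repr a]
        rw [Finsupp.linearCombination_apply, Finsupp.sum]
        exact Finset.sum_subset hsub_d (by
          intro x _ hx
          rw [Finsupp.notMem_support_iff.1 hx, zero_smul])
      have h2' : α = ∑ i ∈ S, c i • b.coord i := by
        rw [← hc, Finsupp.sum]
        exact Finset.sum_subset hsub_c (by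
          intro x _ hx
          rw [Finsupp.notMem_support_iff.1 hx, zero_smul])
      rw [Prod.ext_iff]
      constructor
      · simp [Prod.fst_sum, h1']
      · simp [Prod.snd_sum, h2']
    rw [SetLike.mem_coe, hweq]
    refine Submodule.sum_mem _ fun i hi => ?_
    by_cases hi0 : i = i₀
    · subst hi0
      exact add_mem (Submodule.smul_mem _ _ h0) (Submodule.smul_mem _ _ hη0)
    by_cases hi1 : i = i₁
    · subst hi1
      exact add_mem (Submodule.smul_mem _ _ h1) (Submodule.smul_mem _ _ hη1)
    · rw [hcd i hi0 hi1, ← smul_add]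
      have : ((b i, (0 : Module.Dual F V)) : V × Module.Dual F V)
          + ((0 : V), b.coord i) = (b i, b.coord i) := by simp
      rw [this]
      exact Submodule.smul_mem _ _ (hui i hi0 hi1)
  · -- reverse inclusion
    have hRM : R ≤ VbarSub b ⊓ (U01 b i₀ i₁).orthogonalBilin (polarB F V) := by
      rw [hRdef]
      refine sup_le (Submodule.span_le.2 ?_) (Submodule.span_le.2 ?_)
      · rintro x ⟨i, j, hi0, hi1, hj0, hj1, rfl⟩
        refine Submodule.mem_inf.2 ⟨?_, ?_⟩
        · refine Submodule.mem_prod.2 ⟨trivial, ?_⟩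
          simp only [Prod.snd_add]
          exact add_mem (Submodule.subset_span ⟨i, rfl⟩) (Submodule.subset_span ⟨j, rfl⟩)
        · intro n hn
          refine mem_orthog_of_gen _ (fun p q hp0 hp1 hq0 hq1 => ?_) n hn
          simp only [map_add, LinearMap.add_apply, polar_uu, add_zero, zero_add]
      · rintro x hx
        simp only [Set.mem_insert_iff, Set.mem_singleton_iff] at hx
        rcases hx with rfl | rfl | rfl | rfl | rfl
        · refine Submodule.mem_inf.2 ⟨Submodule.mem_prod.2 ⟨trivial, Submodule.zero_mem _⟩, ?_⟩
          intro n hn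
          refine mem_orthog_of_gen _ (fun p q hp0 hp1 hq0 hq1 => ?_) n hn
          simp [map_add, LinearMap.add_apply, coord_basis, Ne.symm hp0, Ne.symm hq0]
        · refine Submodule.mem_inf.2 ⟨Submodule.mem_prod.2 ⟨trivial, Submodule.zero_mem _⟩, ?_⟩
          intro n hn
          refine mem_orthog_of_gen _ (fun p q hp0 hp1 hq0 hq1 => ?_) n hn
          simp [map_add, LinearMap.add_apply, coord_basis, Ne.symm hp1, Ne.symm hq1]
        · refine Submodule.mem_inf.2 ⟨Submodule.mem_prod.2
            ⟨trivial, Submodule.subset_span ⟨i₀, rfl⟩⟩, ?_⟩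
          intro n hn
          refine mem_orthog_of_gen _ (fun p q hp0 hp1 hq0 hq1 => ?_) n hn
          simp [map_add, LinearMap.add_apply, coord_basis, hp0, hq0]
        · refine Submodule.mem_inf.2 ⟨Submodule.mem_prod.2
            ⟨trivial, Submodule.subset_span ⟨i₁, rfl⟩⟩, ?_⟩
          intro n hn
          refine mem_orthog_of_gen _ (fun p q hp0 hp1 hq0 hq1 => ?_) n hn
          simp [map_add, LinearMap.add_apply, coord_basis, hp1, hq1]
        · refine Submodule.mem_inf.2 ⟨Submodule.mem_prod.2
            ⟨trivial, Submodule.subset_span ⟨k, rfl⟩⟩, ?_⟩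
          intro n hn
          refine mem_orthog_of_gen _ (fun p q hp0 hp1 hq0 hq1 => ?_) n hn
          simp only [map_add, LinearMap.add_apply, polar_uu, add_zero, zero_add]
    intro w hw
    have h2 := hRM hw
    obtain ⟨hv, ho⟩ := Submodule.mem_inf.1 h2
    refine ⟨hv, fun x hx => ?_⟩
    have := ho x hx
    simp only [polarB_apply] at this
    rw [add_comm] at this
    exact this
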